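/- If u* minimizes the mean cost C̄(u) = E_θ[C_θ(u)] over all admissible controls, and for each θ the Gateaux derivative of C_θ at u* in direction δu equals ∫_{t0}^{tf} ∇_u H_θ(x_θ(t), λ_θ(t), u*(t), t) · δu(t) dt, and expectation interchanges with differentiation and integration, then ∇_u E_θ[H_θ(x_θ(t), λ_θ(t), u*(t), t)] = 0 for all t ∈ [t0, tf]. -/
import Mathlib


open MeasureTheory Filter RealInnerProductSpace

/-- Mean-cost optimality (probabilistic PMP): if `u*` minimizes the mean cost
`C̄(u) = E_θ[C_θ(u)]`, the Gateaux derivative of each `C_θ` at `u*` in direction `δu`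
equals `∫ ⟪∇ᵤH_θ(t), δu(t)⟫ dt`, and expectation interchanges with differentiation and
integration (so that `C̄` has Gateaux derivative `∫ ⟪∇ᵤ E_θ[H_θ](t), δu(t)⟫ dt`), then
`∇ᵤ E_θ[H_θ(x_θ(t), λ_θ(t), u*(t), t)] = 0` for all `t ∈ [t0, tf]`. -/
theorem stmt0 {Θ : Type*} [MeasurableSpace Θ] (p : Measure Θ) [IsProbabilityMeasure p]
    {du : ℕ} (t0 tf : ℝ) (ht : t0 < tf)
    (Cbar : (ℝ → EuclideanSpace ℝ (Fin du)) → ℝ)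
    (C : Θ → (ℝ → EuclideanSpace ℝ (Fin du)) → ℝ)
    -- `H θ t u` denotes the Hamiltonian `H_θ(x_θ(t), λ_θ(t), u, t)` evaluated along
    -- the state/co-state trajectories induced by `u*` for realization `θ`.
    (H : Θ → ℝ → EuclideanSpace ℝ (Fin du) → ℝ)
    (ustar : ℝ → EuclideanSpace ℝ (Fin du))
    -- the mean cost
    (hC : ∀ u, Cbar u = ∫ θ, C θ u ∂p)
    -- `u*` minimizes the mean cost over all admissible controls
    (hmin : ∀ u, Cbar ustar ≤ Cbar u)
    -- Gateaux derivative of `C_θ` at `u*` in direction `δu` equals the integral of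
    -- `∇ᵤH_θ · δu`
    (hGateaux : ∀ θ, ∀ δu : ℝ → EuclideanSpace ℝ (Fin du), Continuous δu →
      Tendsto (fun ε : ℝ => (C θ (fun t => ustar t + ε • δu t) - C θ ustar) / ε)
        (nhdsWithin 0 {(0 : ℝ)}ᶜ)
        (nhds (∫ t in t0..tf, ⟪gradient (H θ t) (ustar t), δu t⟫)))
    -- interchange of expectation with differentiation and integration: the mean cost is
    -- Gateaux differentiable with derivative `∫ ⟪∇ᵤ E_θ[H_θ], δu⟫ dt`
    (hInterchange : ∀ δu : ℝ → EuclideanSpace ℝ (Fin du), Continuous δu →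
      Tendsto (fun ε : ℝ => (Cbar (fun t => ustar t + ε • δu t) - Cbar ustar) / ε)
        (nhdsWithin 0 {(0 : ℝ)}ᶜ)
        (nhds (∫ t in t0..tf, ⟪gradient (fun v => ∫ θ, H θ t v ∂p) (ustar t), δu t⟫)))
    -- gradient of expectation is expectation of gradients
    (hgradExch : ∀ t v, gradient (fun w => ∫ θ, H θ t w ∂p) v =
      fun i => ∫ θ, gradient (H θ t) v i ∂p)
    -- continuity of the mean gradient along the trajectory
    (hcont : Continuous fun t => gradient (fun v => ∫ θ, H θ t v ∂p) (ustar t)) :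
    ∀ t ∈ Set.Icc t0 tf, gradient (fun v => ∫ θ, H θ t v ∂p) (ustar t) = 0 := by

  -- abbreviate the mean gradient along the trajectory
  set g : ℝ → EuclideanSpace ℝ (Fin du) :=
    fun t => gradient (fun v => ∫ θ, H θ t v ∂p) (ustar t) with hg
  -- Step 1: the Gateaux derivative of the mean cost vanishes in every continuous direction
  have key : ∀ δu : ℝ → EuclideanSpace ℝ (Fin du), Continuous δu →
      (∫ t in t0..tf, ⟪g t, δu t⟫) = 0 := by
    intro δu hδu
    set I := ∫ t in t0..tf, ⟪g t, δu t⟫ with hI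
    have T := hInterchange δu hδu
    have hsub1 : nhdsWithin (0:ℝ) (Set.Ioi 0) ≤ nhdsWithin 0 {(0:ℝ)}ᶜ :=
      nhdsWithin_mono _ (fun x hx => ne_of_gt hx)
    have hsub2 : nhdsWithin (0:ℝ) (Set.Iio 0) ≤ nhdsWithin 0 {(0:ℝ)}ᶜ :=
      nhdsWithin_mono _ (fun x hx => ne_of_lt hx)
    have hpos : (0:ℝ) ≤ I := by
      refine ge_of_tendsto (T.mono_left hsub1) ?_
      filter_upwards [self_mem_nhdsWithin] with ε (hε : (0:ℝ) < ε)
      exact div_nonneg (sub_nonneg.2 (hmin _)) hε.le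
    have hneg : I ≤ 0 := by
      refine le_of_tendsto (T.mono_left hsub2) ?_
      filter_upwards [self_mem_nhdsWithin] with ε (hε : ε < (0:ℝ))
      exact div_nonpos_of_nonneg_of_nonpos (sub_nonneg.2 (hmin _)) hε.le
    exact le_antisymm hneg hpos
  -- Step 2: apply with δu = g to get ∫ ‖g‖² = 0
  have hzero : (∫ t in t0..tf, ⟪g t, g t⟫) = 0 := key g hcont
  have hfc : Continuous fun t => ⟪g t, g t⟫ := hcont.inner hcont
  have hnonneg : 0 ≤ᵐ[MeasureTheory.volume.restrict (Set.Ioc t0 tf)]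
      fun t => ⟪g t, g t⟫ :=
    Filter.Eventually.of_forall fun t => real_inner_self_nonneg
  have hint : IntervalIntegrable (fun t => ⟪g t, g t⟫) MeasureTheory.volume t0 tf :=
    hfc.intervalIntegrable _ _
  have hae : (fun t => ⟪g t, g t⟫) =ᵐ[MeasureTheory.volume.restrict (Set.Ioc t0 tf)]
      (0 : ℝ → ℝ) :=
    (intervalIntegral.integral_eq_zero_iff_of_le_of_nonneg_ae ht.le hnonneg hint).1 hzero
  have hres : MeasureTheory.volume.restrict (Set.Ioc t0 tf) =
      MeasureTheory.volume.restrict (Set.Icc t0 tf) :=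
    Measure.restrict_congr_set Ioc_ae_eq_Icc
  have haeIcc : (fun t => ⟪g t, g t⟫) =ᵐ[MeasureTheory.volume.restrict (Set.Icc t0 tf)]
      (0 : ℝ → ℝ) := hres ▸ hae
  have heq : Set.EqOn (fun t => ⟪g t, g t⟫) (0 : ℝ → ℝ) (Set.Icc t0 tf) :=
    Measure.eqOn_Icc_of_ae_eq MeasureTheory.volume ht.ne haeIcc hfc.continuousOn
      continuousOn_const
  intro t htt
  have : ⟪g t, g t⟫ = 0 := heq htt
  exact inner_self_eq_zero.1 this
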